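/- Independence of individual masks from any T encoded shares: under the T-private MDS encoding, if Z is uniform on F^{U−T} (the partitioned mask), N is uniform on F^T and independent of Z, then the T shares obtained from any T columns are independent of Z; i.e., I(Z; shares_T) = 0. -/

import Mathlib

open ProbabilityTheory

theorem t_private_shares_independent_of_mask
    {F : Type*} [Field F] [Fintype F]
    [MeasurableSpace F] [MeasurableSingletonClass F] [DiscreteMeasurableSpace F]
    (T U N : ℕ) (hTU : T < U) (hUN : U ≤ N)
    (W : Matrix (Fin U) (Fin N) F)
    (hpriv : ∀ τ' : Fin T → Fin N, Function.Injective τ' →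
      IsUnit (Matrix.of fun k l : Fin T =>
        W ⟨U - T + (k : ℕ), by have := k.isLt; omega⟩ (τ' l)))
    (τ : Fin T → Fin N) (hτ : Function.Injective τ)
    {Ω : Type*} [MeasurableSpace Ω] (μ : MeasureTheory.Measure Ω)
    [MeasureTheory.IsProbabilityMeasure μ]
    (Z : Ω → (Fin (U - T) → F)) (Nr : Ω → (Fin T → F))
    (hZ : Measurable Z) (hNr : Measurable Nr)
    (hZunif : μ.map Z = (PMF.uniformOfFintype (Fin (U - T) → F)).toMeasure)
    (hNrunif : μ.map Nr = (PMF.uniformOfFintype (Fin T → F)).toMeasure)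
    (hind : IndepFun Z Nr μ)
    (S : Ω → (Fin T → F))
    (hS : ∀ ω l, S ω l =
      (∑ k : Fin (U - T), Z ω k * W ⟨(k : ℕ), by have := k.isLt; omega⟩ (τ l)) +
      (∑ k : Fin T, Nr ω k * W ⟨U - T + (k : ℕ), by have := k.isLt; omega⟩ (τ l))) :
    IndepFun S Z μ := by
  classical
  set M : Matrix (Fin T) (Fin T) F := Matrix.of fun k l : Fin T =>
    W ⟨U - T + (k : ℕ), by have := k.isLt; omega⟩ (τ l) with hM
  have hMunit : IsUnit M := hpriv τ hτ
  have hMdet : IsUnit M.det := (Matrix.isUnit_iff_isUnit_det M).mp hMunit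
  set f : (Fin (U - T) → F) → (Fin T → F) := fun z l =>
    ∑ k : Fin (U - T), z k * W ⟨(k : ℕ), by have := k.isLt; omega⟩ (τ l) with hf
  have hSf : ∀ ω, S ω = f (Z ω) + Matrix.vecMul (Nr ω) M := by
    intro ω; funext l
    simp [hS ω l, hf, Matrix.vecMul, dotProduct, hM]
  -- S is measurable
  have hSm : Measurable S := by
    have : S = (fun p : (Fin (U - T) → F) × (Fin T → F) =>
        f p.1 + Matrix.vecMul p.2 M) ∘ (fun ω => (Z ω, Nr ω)) := by
      funext ω; simp [hSf ω]
    rw [this]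
    exact (measurable_of_countable _).comp (hZ.prodMk hNr)
  -- key computation on singletons
  have hNrsing : ∀ n : Fin T → F,
      μ (Nr ⁻¹' {n}) = (Fintype.card (Fin T → F) : ENNReal)⁻¹ := by
    intro n
    have := congrArg (fun ν : MeasureTheory.Measure (Fin T → F) => ν {n}) hNrunif
    rw [MeasureTheory.Measure.map_apply hNr (measurableSet_singleton n)] at this
    rw [this, PMF.toMeasure_apply_singleton _ _ (measurableSet_singleton n),
      PMF.uniformOfFintype_apply]
  have key : ∀ (s : Fin T → F) (z : Fin (U - T) → F),
      μ (S ⁻¹' {s} ∩ Z ⁻¹' {z}) =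
        μ (Z ⁻¹' {z}) * (Fintype.card (Fin T → F) : ENNReal)⁻¹ := by
    intro s z
    set n0 : Fin T → F := Matrix.vecMul (s - f z) M⁻¹ with hn0
    have hset : S ⁻¹' {s} ∩ Z ⁻¹' {z} = Z ⁻¹' {z} ∩ Nr ⁻¹' {n0} := by
      ext ω
      simp only [Set.mem_inter_iff, Set.mem_preimage, Set.mem_singleton_iff]
      constructor
      · rintro ⟨hs1, hz1⟩
        refine ⟨hz1, ?_⟩
        have : Matrix.vecMul (Nr ω) M = s - f z := by
          rw [← hs1, hSf ω, hz1]; ring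
        rw [hn0, ← this, Matrix.vecMul_vecMul, Matrix.mul_nonsing_inv M hMdet,
          Matrix.vecMul_one]
      · rintro ⟨hz1, hn1⟩
        refine ⟨?_, hz1⟩
        rw [hSf ω, hz1, hn1, hn0, Matrix.vecMul_vecMul,
          Matrix.nonsing_inv_mul M hMdet, Matrix.vecMul_one]
        ring
    rw [hset, hind.measure_inter_preimage_eq_mul _ _ (measurableSet_singleton z)
      (measurableSet_singleton n0), hNrsing n0]
  have hSsing : ∀ s : Fin T → F,
      μ (S ⁻¹' {s}) = (Fintype.card (Fin T → F) : ENNReal)⁻¹ := by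
    intro s
    have hdecomp : S ⁻¹' {s} = ⋃ z : Fin (U - T) → F, (S ⁻¹' {s} ∩ Z ⁻¹' {z}) := by
      ext ω
      simp only [Set.mem_iUnion, Set.mem_inter_iff, Set.mem_preimage,
        Set.mem_singleton_iff]
      exact ⟨fun h => ⟨Z ω, h, rfl⟩, fun ⟨z, h, _⟩ => h⟩
    have hdisj : Pairwise (Function.onFun Disjoint
        fun z : Fin (U - T) → F => S ⁻¹' {s} ∩ Z ⁻¹' {z}) := by
      intro a b hab
      refine Set.disjoint_left.mpr ?_
      rintro ω ⟨-, ha⟩ ⟨-, hb⟩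
      exact hab (ha.symm.trans hb)
    rw [hdecomp, MeasureTheory.measure_iUnion hdisj (fun z =>
      (hSm (measurableSet_singleton s)).inter (hZ (measurableSet_singleton z)))]
    rw [tsum_fintype]
    simp_rw [key s]
    rw [← Finset.sum_mul]
    have hsum : ∑ z : Fin (U - T) → F, μ (Z ⁻¹' {z}) = 1 := by
      have hdec2 : (Set.univ : Set Ω) = ⋃ z : Fin (U - T) → F, Z ⁻¹' {z} := by
        ext ω; simp
      have hdisj2 : Pairwise (Function.onFun Disjoint
          fun z : Fin (U - T) → F => Z ⁻¹' {z}) := by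
        intro a b hab
        refine Set.disjoint_left.mpr ?_
        rintro ω ha hb
        exact hab ((Set.mem_singleton_iff.mp ha).symm.trans (Set.mem_singleton_iff.mp hb))
      have := MeasureTheory.measure_iUnion (μ := μ) hdisj2
        (fun z => hZ (measurableSet_singleton z))
      rw [← hdec2] at this
      rw [← tsum_fintype (L := SummationFilter.unconditional _), ← this, MeasureTheory.measure_univ]
    rw [hsum, one_mul]
  haveI : MeasureTheory.IsProbabilityMeasure (μ.map S) :=
    MeasureTheory.Measure.isProbabilityMeasure_map hSm.aemeasurable
  haveI : MeasureTheory.IsProbabilityMeasure (μ.map Z) :=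
    MeasureTheory.Measure.isProbabilityMeasure_map hZ.aemeasurable
  rw [indepFun_iff_map_prod_eq_prod_map_map hSm.aemeasurable hZ.aemeasurable]
  apply MeasureTheory.Measure.ext_of_singleton
  rintro ⟨s, z⟩
  have hl : μ.map (fun ω => (S ω, Z ω)) {(s, z)} = μ (S ⁻¹' {s} ∩ Z ⁻¹' {z}) := by
    rw [MeasureTheory.Measure.map_apply (hSm.prodMk hZ) (measurableSet_singleton _)]
    congr 1
    ext ω
    simp [Prod.ext_iff]
  have hr : (μ.map S).prod (μ.map Z) {(s, z)} = μ (S ⁻¹' {s}) * μ (Z ⁻¹' {z}) := by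
    rw [← Set.singleton_prod_singleton, MeasureTheory.Measure.prod_prod,
      MeasureTheory.Measure.map_apply hSm (measurableSet_singleton _),
      MeasureTheory.Measure.map_apply hZ (measurableSet_singleton _)]
  rw [hl, hr, key s z, hSsing s, mul_comm]
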